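/- For k ≥ 2, let r_k satisfy r_k = 1 + z(r_k^{k-1} + r_k^k), and let h = z·r_k^{2k-2}. Then B_h(z) = (4/(1-z))·U_{k-2}((1+z)/(1-z)), where U_n is the n-th Chebyshev polynomial of the second kind. In particular, for k=2 (large Schröder numbers), B_{z·r²}(z) = 4/(1-z). -/

import Mathlib

open PowerSeries

/-- Composition `f ∘ g` of formal power series (meaningful when the constant
coefficient of `g` is zero). -/
noncomputable def comp (f g : PowerSeries ℚ) : PowerSeries ℚ :=
  PowerSeries.mk fun n =>
    ∑ i ∈ Finset.range (n + 1), (PowerSeries.coeff i f) * (PowerSeries.coeff n (g ^ i))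

/-- A formal power series `f` is pseudo-involutory when its compositional
inverse is `-f(-z)`. -/
def PseudoInvolutory (f : PowerSeries ℚ) : Prop :=
  comp f (-(comp f (-X))) = X ∧ comp (-(comp f (-X))) f = X

section CompLemmas

variable (g : PowerSeries ℚ)

lemma coeff_pow_eq_zero' (hg : constantCoeff g = 0) {n i : ℕ} (h : n < i) :
    coeff n (g ^ i) = 0 := by
  have hdvd : (X : PowerSeries ℚ) ^ i ∣ g ^ i :=
    pow_dvd_pow_of_dvd (X_dvd_iff.mpr hg) i
  exact X_pow_dvd_iff.mp hdvd n h

lemma coeff_comp' (hg : constantCoeff g = 0) (f : PowerSeries ℚ) {n N : ℕ} (h : n < N) :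
    coeff n (comp f g) = coeff n (Polynomial.eval₂ C g (trunc N f)) := by
  rw [eval₂_trunc_eq_sum_range, map_sum]
  simp only [coeff_C_mul]
  rw [comp, coeff_mk]
  refine Finset.sum_subset (Finset.range_subset_range.mpr h) ?_
  intro i _ hi
  rw [Finset.mem_range, not_lt] at hi
  rw [coeff_pow_eq_zero' g hg (lt_of_lt_of_le (Nat.lt_succ_self n) hi), mul_zero]

lemma coeff_eval₂_coe' (hg : constantCoeff g = 0) (P : Polynomial ℚ) {n N : ℕ} (h : n < N) :
    coeff n (Polynomial.eval₂ C g P)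
      = coeff n (Polynomial.eval₂ C g (trunc N (P : PowerSeries ℚ))) := by
  have hM : P.natDegree < max N (P.natDegree + 1) := lt_of_lt_of_le (Nat.lt_succ_self _)
    (le_max_right _ _)
  rw [Polynomial.eval₂_eq_sum_range' C hM g, eval₂_trunc_eq_sum_range,
    map_sum, map_sum]
  simp only [coeff_C_mul, Polynomial.coeff_coe]
  refine (Finset.sum_subset (Finset.range_subset_range.mpr (le_max_left _ _)) ?_).symm
  intro i _ hi
  rw [Finset.mem_range, not_lt] at hi
  rw [coeff_pow_eq_zero' g hg (lt_of_lt_of_le h hi), mul_zero]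

lemma comp_add' (f₁ f₂ : PowerSeries ℚ) :
    comp (f₁ + f₂) g = comp f₁ g + comp f₂ g := by
  ext n
  simp [comp, coeff_mk, add_mul, Finset.sum_add_distrib]

lemma comp_sub' (f₁ f₂ : PowerSeries ℚ) :
    comp (f₁ - f₂) g = comp f₁ g - comp f₂ g := by
  ext n
  simp [comp, coeff_mk, sub_mul, Finset.sum_sub_distrib]

lemma comp_C' (a : ℚ) : comp (C a) g = C a := by
  ext n
  simp only [comp, coeff_mk, coeff_C]
  rw [Finset.sum_eq_single 0]
  · simp [coeff_one]
  · intro i _ hi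
    simp [hi]
  · intro h
    simp at h

lemma comp_one' : comp 1 g = 1 := by
  simpa using comp_C' g 1

lemma comp_X' (hg : constantCoeff g = 0) : comp X g = g := by
  ext n
  simp only [comp, coeff_mk, coeff_X]
  cases n with
  | zero =>
    simpa using hg.symm
  | succ n =>
    rw [Finset.sum_eq_single 1]
    · simp
    · intro i _ hi
      simp [hi]
    · intro h
      simp at h

lemma comp_mul' (hg : constantCoeff g = 0) (f₁ f₂ : PowerSeries ℚ) :
    comp (f₁ * f₂) g = comp f₁ g * comp f₂ g := by
  ext n
  rw [coeff_comp' g hg (f₁ * f₂) (Nat.lt_succ_self n)]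
  rw [← trunc_trunc_mul_trunc, ← Polynomial.coe_mul,
    ← coeff_eval₂_coe' g hg _ (Nat.lt_succ_self n), Polynomial.eval₂_mul]
  rw [PowerSeries.coeff_mul, PowerSeries.coeff_mul]
  refine Finset.sum_congr rfl ?_
  intro p hp
  rw [Finset.HasAntidiagonal.mem_antidiagonal] at hp
  rw [coeff_comp' g hg f₁ (show p.1 < n + 1 by omega),
    coeff_comp' g hg f₂ (show p.2 < n + 1 by omega)]

lemma comp_pow' (hg : constantCoeff g = 0) (f : PowerSeries ℚ) (n : ℕ) :
    comp (f ^ n) g = (comp f g) ^ n := by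
  induction n with
  | zero => simpa using comp_one' g
  | succ n ih => rw [pow_succ, pow_succ, comp_mul' g hg, ih]

lemma constantCoeff_comp' (f : PowerSeries ℚ) :
    constantCoeff (comp f g) = constantCoeff f := by
  rw [← coeff_zero_eq_constantCoeff_apply, ← coeff_zero_eq_constantCoeff_apply]
  simp [comp, coeff_mk]

lemma comp_inv' (hg : constantCoeff g = 0) (u : PowerSeries ℚ)
    (hu : constantCoeff u ≠ 0) : comp u⁻¹ g = (comp u g)⁻¹ := by
  have hc : constantCoeff (comp u g) ≠ 0 := by
    rw [constantCoeff_comp']; exact hu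
  rw [PowerSeries.eq_inv_iff_mul_eq_one hc, ← comp_mul' g hg,
    PowerSeries.inv_mul_cancel u hu, comp_one']

lemma comp_aeval' (hg : constantCoeff g = 0) (x : PowerSeries ℚ) (p : Polynomial ℚ) :
    comp (Polynomial.aeval x p) g = Polynomial.aeval (comp x g) p := by
  induction p using Polynomial.induction_on' with
  | add p q hp hq => rw [map_add, comp_add' g, hp, hq, map_add]
  | monomial i a =>
    rw [Polynomial.aeval_monomial, Polynomial.aeval_monomial, comp_mul' g hg,
      comp_pow' g hg]
    congr 1
    simpa using comp_C' g a

end CompLemmas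

lemma cheb_eval (x r : PowerSeries ℚ) (hx : x * (2 * r) = r ^ 2 + 1) (n : ℕ) :
    Polynomial.aeval x (Polynomial.Chebyshev.U ℚ (n : ℤ)) * (r ^ 2 - 1) * r ^ n
      = r ^ (2 * n + 2) - 1 := by
  have key : ∀ n : ℕ,
      (Polynomial.aeval x (Polynomial.Chebyshev.U ℚ (n : ℤ)) * (r ^ 2 - 1) * r ^ n
        = r ^ (2 * n + 2) - 1) ∧
      (Polynomial.aeval x (Polynomial.Chebyshev.U ℚ ((n : ℤ) + 1)) * (r ^ 2 - 1) * r ^ (n + 1)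
        = r ^ (2 * (n + 1) + 2) - 1) := by
    intro n
    induction n with
    | zero =>
      constructor
      · rw [Nat.cast_zero, Polynomial.Chebyshev.U_zero, map_one]
        ring
      · rw [Nat.cast_zero, zero_add, Polynomial.Chebyshev.U_one]
        simp only [map_mul, map_ofNat, Polynomial.aeval_X]
        linear_combination (r ^ 2 - 1) * hx
    | succ n ih =>
      refine ⟨by simpa [Nat.cast_succ] using ih.2, ?_⟩
      have hrec := Polynomial.Chebyshev.U_add_two ℚ (n : ℤ)
      rw [show ((n + 1 : ℕ) : ℤ) + 1 = (n : ℤ) + 2 by push_cast; ring, hrec]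
      have h1 := ih.1
      have h2 := ih.2
      simp only [map_sub, map_mul, map_ofNat, Polynomial.aeval_X]
      linear_combination (2 * x * r) * h2 + (-(r ^ 2)) * h1 + (r ^ (2 * n + 4) - 1) * hx
  exact (key n).1

/-- For `k ≥ 2`, let `r_k = 1 + z(r_k^{k-1} + r_k^k)` and `h = z·r_k^{2k-2}`.
Then `B_h(z) = (4/(1-z))·U_{k-2}((1+z)/(1-z))`, where `U_n` is the `n`-th
Chebyshev polynomial of the second kind.  (For `k = 2`, the large Schröder
numbers, this gives `B_{z·r²}(z) = 4/(1-z)`.) -/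
theorem generalized_schroeder_B (k : ℕ) (hk : 2 ≤ k) (r : PowerSeries ℚ)
    (hr : r = 1 + X * (r ^ (k - 1) + r ^ k)) :
    (X * r ^ (2 * k - 2)) - X =
      X * (X * r ^ (2 * k - 2)) *
        comp
          ((4 : PowerSeries ℚ) * (1 - X)⁻¹ *
            Polynomial.aeval ((1 + X) * (1 - X)⁻¹ : PowerSeries ℚ)
              (Polynomial.Chebyshev.U ℚ ((k : ℤ) - 2)))
          (X * (X * r ^ (2 * k - 2))) := by
  obtain ⟨m, rfl⟩ : ∃ m, k = m + 2 := ⟨k - 2, by omega⟩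
  rw [show 2 * (m + 2) - 2 = 2 * m + 2 by omega] at *
  rw [show (m + 2) - 1 = m + 1 by omega] at hr
  rw [show ((m + 2 : ℕ) : ℤ) - 2 = (m : ℤ) by push_cast; ring]
  -- basic facts about r
  have hcr : constantCoeff r = 1 := by
    have := congrArg (constantCoeff) hr
    simpa using this
  have hrel : r - 1 = X * r ^ (m + 1) * (1 + r) := by
    linear_combination hr
  have hXne : (X : PowerSeries ℚ) ≠ 0 := X_ne_zero
  have hrne : r ≠ 0 := by
    intro h; rw [h] at hcr; simp at hcr
  have hr1ne : r - 1 ≠ 0 := by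
    intro h
    have h1 : r = 1 := by rwa [sub_eq_zero] at h
    rw [h1] at hrel
    have := congrArg (coeff 1) hrel
    simp at this
    norm_num at this
  have hrp1 : r + 1 ≠ 0 := by
    intro h
    have := congrArg (constantCoeff) h
    simp [hcr] at this
  -- the inner series g
  set g : PowerSeries ℚ := X * (X * r ^ (2 * m + 2)) with hgdef
  have hg0 : constantCoeff g = 0 := by
    rw [hgdef]; simp
  have h1X : constantCoeff ((1 : PowerSeries ℚ) - X) ≠ 0 := by simp
  -- rewrite the composition
  rw [comp_mul' g hg0, comp_mul' g hg0, comp_aeval' g hg0, comp_mul' g hg0,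
    comp_add' g, comp_one' g, comp_X' g hg0, comp_inv' g hg0 _ h1X,
    comp_sub' g, comp_one' g, comp_X' g hg0,
    show (4 : PowerSeries ℚ) = C (4 : ℚ) from (map_ofNat _ 4).symm, comp_C' g,
    map_ofNat]
  -- algebraic identities
  have hv1 : (1 - g) * (1 - g)⁻¹ = 1 :=
    PowerSeries.mul_inv_cancel _ (by simp [hg0])
  have h4r : (1 - g) * (1 + r) ^ 2 = 4 * r := by
    linear_combination ((r - 1) + X * r ^ (m + 1) * (1 + r)) * hrel - (1 + r) ^ 2 * hgdef
  have hv : (1 - g)⁻¹ * (4 * r) = (1 + r) ^ 2 := by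
    linear_combination (-(1 - g)⁻¹) * h4r + (1 + r) ^ 2 * hv1
  have h2g : (1 + g) * (1 + r) ^ 2 = 2 * (r ^ 2 + 1) := by
    linear_combination (-(X * r ^ (m + 1) * (1 + r) + (r - 1))) * hrel + (1 + r) ^ 2 * hgdef
  have h2ne : (2 : PowerSeries ℚ) ≠ 0 := by
    intro h
    have := congrArg (constantCoeff) h
    rw [map_ofNat] at this
    norm_num at this
  have hx2 : (2 : PowerSeries ℚ) * ((1 + g) * (1 - g)⁻¹ * (2 * r)) = 2 * (r ^ 2 + 1) := by
    linear_combination (1 + g) * hv + h2g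
  have hx : (1 + g) * (1 - g)⁻¹ * (2 * r) = r ^ 2 + 1 := mul_left_cancel₀ h2ne hx2
  have hcheb := cheb_eval ((1 + g) * (1 - g)⁻¹) r hx m
  -- cancel the regular factor (r² - 1) * r^(m+1)
  have hc : ((r ^ 2 - 1) * r ^ (m + 1) : PowerSeries ℚ) ≠ 0 := by
    refine mul_ne_zero ?_ (pow_ne_zero _ hrne)
    have e : (r ^ 2 - 1 : PowerSeries ℚ) = (r - 1) * (r + 1) := by ring
    rw [e]
    exact mul_ne_zero hr1ne hrp1
  apply mul_right_cancel₀ hc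
  linear_combination
    (-(4 * (1 - g)⁻¹ * Polynomial.aeval ((1 + g) * (1 - g)⁻¹)
        (Polynomial.Chebyshev.U ℚ (m : ℤ)) * (r ^ 2 - 1) * r ^ (m + 1))) * hgdef +
    (-(4 * (1 - g)⁻¹ * r * X ^ 2 * r ^ (2 * m + 2))) * hcheb +
    (-(X ^ 2 * r ^ (2 * m + 2) * (r ^ (2 * m + 2) - 1))) * hv +
    (X * (r ^ (2 * m + 2) - 1) * (r + 1) * r ^ (m + 1)) * hrel
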